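/- Let X be a compact Hausdorff space with a continuous action α of a semigroup S which is expansive and has the pseudo-orbit tracing property. Then (X,S,α) is topologically semistable: there exists an entourage W of X and a finite subset K ⊆ S such that for every continuous action β of S on X with (α_k(x), β_k(x)) ∈ W for all k ∈ K and x ∈ X, there exists a continuous map h : X → X with α_s ∘ h = h ∘ β_s for all s ∈ S. -/

import Mathlib

/-- Topological semistability: if a continuous semigroup action `α` of `S` on a compact
Hausdorff space `X` is expansive and has the pseudo-orbit tracing property, then there
exist an entourage `W` and a finite `K ⊆ S` such that every continuous action `β` of `S`
on `X` with `(α_k x, β_k x) ∈ W` for all `k ∈ K`, `x ∈ X` admits a continuous map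
`h : X → X` with `α_s ∘ h = h ∘ β_s` for all `s ∈ S`. -/
theorem stmt_3 {S X : Type*} [Semigroup S] [UniformSpace X] [CompactSpace X] [T2Space X]
    (α : S → X → X) (hαact : ∀ (s t : S) (x : X), α (s * t) x = α s (α t x))
    (hαcont : ∀ s : S, Continuous (α s))
    (hexp : ∃ E ∈ uniformity X, ∀ x y : X, x ≠ y → ∃ s : S, (α s x, α s y) ∉ E)
    (hpotp : ∀ U ∈ uniformity X, ∃ K : Finset S, ∃ V ∈ uniformity X,
        ∀ xs : S → X, (∀ k ∈ K, ∀ s : S, (α k (xs s), xs (k * s)) ∈ V) →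
          ∃ x : X, ∀ s : S, (α s x, xs s) ∈ U) :
    ∃ W ∈ uniformity X, ∃ K : Finset S,
      ∀ β : S → X → X, (∀ (s t : S) (x : X), β (s * t) x = β s (β t x)) →
        (∀ s : S, Continuous (β s)) →
        (∀ k ∈ K, ∀ x : X, (α k x, β k x) ∈ W) →
        ∃ h : X → X, Continuous h ∧ ∀ (s : S) (x : X), α s (h x) = h (β s x) := by
  obtain ⟨E, hE, hexpE⟩ := hexp
  obtain ⟨E', hE', hE'symm, hE'comp⟩ := comp_symm_mem_uniformity_sets hE
  obtain ⟨U₀, ⟨hU₀mem, hU₀closed⟩, hU₀sub⟩ := uniformity_hasBasis_closed.mem_iff.1 hE'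
  set U : Set (X × X) := SetRel.symmetrize U₀ with hUdef
  have hUmem : U ∈ uniformity X := symmetrize_mem_uniformity hU₀mem
  have hUsymm : SetRel.IsSymm U := SetRel.isSymm_symmetrize (R := U₀)
  have hUclosed : IsClosed U :=
    hU₀closed.inter (hU₀closed.preimage continuous_swap)
  have hUsub : U ⊆ E' := (SetRel.symmetrize_subset_self (R := U₀)).trans hU₀sub
  obtain ⟨K, V, hV, hshadow⟩ := hpotp U hUmem
  refine ⟨V, hV, K, ?_⟩
  intro β hβact hβcont hW
  -- unique shadowing point
  have hex : ∀ x : X, ∃! z : X, ∀ s : S, (α s z, β s x) ∈ U := by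
    intro x
    obtain ⟨z, hz⟩ := hshadow (fun s => β s x) (by
      intro k hk s
      rw [hβact]
      exact hW k hk (β s x))
    refine ⟨z, hz, ?_⟩
    intro z' hz'
    by_contra hne
    obtain ⟨s, hs⟩ := hexpE z' z hne
    exact hs (hE'comp ⟨β s x, hUsub (hz' s), hUsub (hUsymm.symm _ _ (hz s))⟩)
  classical
  set h : X → X := fun x => (hex x).choose with hhdef
  have hP : ∀ (x : X) (s : S), (α s (h x), β s x) ∈ U := fun x => (hex x).choose_spec.1
  have huniq : ∀ (x z : X), (∀ s : S, (α s z, β s x) ∈ U) → z = h x :=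
    fun x => (hex x).choose_spec.2
  refine ⟨h, ?_, ?_⟩
  · -- continuity via closed graph and compactness
    set G : Set (X × X) := {p : X × X | ∀ s : S, (α s p.2, β s p.1) ∈ U} with hGdef
    have hGclosed : IsClosed G := by
      have : G = ⋂ s : S, (fun p : X × X => (α s p.2, β s p.1)) ⁻¹' U := by
        ext p; simp [hGdef]
      rw [this]
      exact isClosed_iInter fun s =>
        hUclosed.preimage (((hαcont s).comp continuous_snd).prodMk
          ((hβcont s).comp continuous_fst))
    rw [continuous_iff_isClosed]
    intro C hC
    have key : h ⁻¹' C = Prod.fst '' (G ∩ Set.univ ×ˢ C) := by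
      ext x
      constructor
      · intro hx
        exact ⟨(x, h x), ⟨fun s => hP x s, Set.mem_univ _, hx⟩, rfl⟩
      · rintro ⟨⟨x', z⟩, ⟨hG, -, hzC⟩, rfl⟩
        simpa [Set.mem_preimage, ← huniq x' z hG] using hzC
    rw [key]
    exact isClosedMap_fst_of_compactSpace _
      (hGclosed.inter (isClosed_univ.prod hC))
  · -- semiconjugacy
    intro t x
    refine huniq (β t x) (α t (h x)) ?_
    intro s
    rw [← hαact, ← hβact]
    exact hP x (s * t)
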